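/- Let G be a distance-hereditary graph and let x, y be adjacent true twins (N(x) ∪ {x} = N(y) ∪ {y}). Then G − xy is distance hereditary. -/

import Mathlib

open SimpleGraph

section Aux

variable {W : Type} {K : SimpleGraph W} {x y : W}

/-- Twin rerouting: any two vertices forming the pair `s(x,y)` have the same other
neighbours. -/
private lemma twin_pair (htw : ∀ a, a ≠ x → a ≠ y → (K.Adj a x ↔ K.Adj a y))
    {a b u : W} (hab : s(a, b) = s(x, y)) (hua : u ≠ a) (hub : u ≠ b)
    (h : K.Adj u a) : K.Adj u b := by
  rcases Sym2.eq_iff.mp hab with ⟨hax, hby⟩ | ⟨hay, hbx⟩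
  · subst hax; subst hby
    exact (htw u hua hub).mp h
  · subst hay; subst hbx
    exact (htw u hub hua).mpr h

/-- Any walk between a pair of vertices other than `{x,y}` can be rerouted to avoid
the edge `xy`, without increasing the length, when `x` and `y` are true twins. -/
private lemma walk_avoid (htw : ∀ a, a ≠ x → a ≠ y → (K.Adj a x ↔ K.Adj a y)) :
    ∀ (n : ℕ) {u v : W} (p : K.Walk u v), p.length ≤ n → s(u, v) ≠ s(x, y) →
      ∃ q : (K.deleteEdges {s(x, y)}).Walk u v, q.length ≤ p.length := by
  intro n
  induction n with
  | zero =>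
    intro u v p hlen _
    cases p with
    | nil => exact ⟨.nil, le_rfl⟩
    | cons h p' => simp at hlen
  | succ n ih =>
    intro u v p hlen hne
    cases p with
    | nil => exact ⟨.nil, le_rfl⟩
    | @cons _ w _ h p' =>
      have hlen' : p'.length ≤ n := by
        simpa [Nat.succ_le_succ_iff] using hlen
      by_cases huv : u = v
      · subst huv
        exact ⟨.nil, by simp⟩
      by_cases he : s(u, w) = s(x, y)
      · -- the first edge is the deleted one
        have hvw : v ≠ w := by
          rintro rfl
          exact hne he
        have hne' : s(w, v) ≠ s(x, y) := by
          intro hwv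
          rcases Sym2.eq_iff.mp he with ⟨hux, hwy⟩ | ⟨huy, hwx⟩ <;>
            rcases Sym2.eq_iff.mp hwv with ⟨h1, h2⟩ | ⟨h1, h2⟩ <;>
              subst_vars <;> simp_all
        obtain ⟨q', hq'⟩ := ih p' hlen' hne'
        cases q' with
        | nil => exact absurd rfl hvw.symm
        | @cons _ b _ h2 q'' =>
          by_cases hb : b = u
          · subst hb
            refine ⟨q'', ?_⟩
            simp only [Walk.length_cons] at hq' ⊢
            omega
          · have hbw : b ≠ w := ((SimpleGraph.deleteEdges_adj).mp h2).1.ne'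
            have hKwb : K.Adj w b := ((SimpleGraph.deleteEdges_adj).mp h2).1
            have hKub : K.Adj u b :=
              (twin_pair htw ((Sym2.eq_swap (a := u) (b := w)).symm.trans he) hbw hb
                hKwb.symm).symm
            have hub' : s(u, b) ≠ s(x, y) := by
              intro hub
              rcases Sym2.eq_iff.mp he with ⟨h1, h2⟩ | ⟨h1, h2⟩ <;>
                rcases Sym2.eq_iff.mp hub with ⟨h3, h4⟩ | ⟨h3, h4⟩ <;>
                  subst_vars <;> simp_all
            refine ⟨.cons (SimpleGraph.deleteEdges_adj.mpr ⟨hKub, by simpa using hub'⟩) q'', ?_⟩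
            simp only [Walk.length_cons] at hq' ⊢
            omega
      · -- the first edge survives
        have h' : (K.deleteEdges {s(x, y)}).Adj u w :=
          SimpleGraph.deleteEdges_adj.mpr ⟨h, by simpa using he⟩
        by_cases he2 : s(w, v) = s(x, y)
        · -- the remaining endpoints form the twin pair; shortcut directly
          have huw : u ≠ w := h.ne
          have hKuv : K.Adj u v := twin_pair htw he2 huw huv h
          refine ⟨.cons (SimpleGraph.deleteEdges_adj.mpr ⟨hKuv, by simpa using hne⟩) .nil, ?_⟩
          simp
        · obtain ⟨q', hq'⟩ := ih p' hlen' he2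
          exact ⟨.cons h' q', by simpa using Nat.succ_le_succ hq'⟩

/-- Deleting the edge between adjacent true twins does not change distances between
other pairs of vertices. -/
private lemma dist_deleteEdge (htw : ∀ a, a ≠ x → a ≠ y → (K.Adj a x ↔ K.Adj a y))
    {u v : W} (hne : s(u, v) ≠ s(x, y)) :
    (K.deleteEdges {s(x, y)}).dist u v = K.dist u v := by
  have hle : K.deleteEdges {s(x, y)} ≤ K := SimpleGraph.deleteEdges_le _
  by_cases hr : K.Reachable u v
  · obtain ⟨p, hp⟩ := hr.exists_walk_length_eq_dist
    obtain ⟨q, hq⟩ := walk_avoid htw p.length p le_rfl hne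
    have h1 : (K.deleteEdges {s(x, y)}).dist u v ≤ K.dist u v :=
      (SimpleGraph.dist_le q).trans (hp ▸ hq)
    have hr' : (K.deleteEdges {s(x, y)}).Reachable u v := ⟨q⟩
    obtain ⟨q', hq'⟩ := hr'.exists_walk_length_eq_dist
    have h2 : K.dist u v ≤ q'.length := by
      simpa using SimpleGraph.dist_le (q'.mapLe hle)
    omega
  · have hr' : ¬ (K.deleteEdges {s(x, y)}).Reachable u v := fun h => hr (h.mono hle)
    rw [SimpleGraph.dist_eq_zero_of_not_reachable hr,
      SimpleGraph.dist_eq_zero_of_not_reachable hr']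

end Aux

/-- A graph is distance hereditary if every connected induced subgraph preserves the
distances of the original graph. -/
def IsDistHereditary {V : Type} (G : SimpleGraph V) : Prop :=
  ∀ s : Set V, (SimpleGraph.induce s G).Connected →
    ∀ x y : s, (SimpleGraph.induce s G).dist x y = G.dist ↑x ↑y

/-- deleting the edge between two adjacent true twins of a
distance-hereditary graph yields a distance-hereditary graph. -/
theorem stmt16 (V : Type) [Fintype V] (G : SimpleGraph V)
    (hDH : IsDistHereditary G) (x y : V) (hadj : G.Adj x y)
    (htwin : G.neighborSet x ∪ {x} = G.neighborSet y ∪ {y}) :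
    IsDistHereditary (G.deleteEdges {s(x, y)}) := by
  classical
  have hxy : x ≠ y := hadj.ne
  -- extract the usable twin condition
  have htw : ∀ a, a ≠ x → a ≠ y → (G.Adj a x ↔ G.Adj a y) := by
    intro a hax hay
    have h1 : a ∈ G.neighborSet x ∪ {x} ↔ a ∈ G.neighborSet y ∪ {y} := by rw [htwin]
    simp only [Set.mem_union, mem_neighborSet, Set.mem_singleton_iff] at h1
    constructor
    · intro h
      rcases h1.mp (Or.inl h.symm) with h' | h'
      · exact h'.symm
      · exact absurd h' hay
    · intro h
      rcases h1.mpr (Or.inl h.symm) with h' | h'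
      · exact h'.symm
      · exact absurd h' hax
  intro s hconn u v
  by_cases hxs : x ∈ s ∧ y ∈ s
  · obtain ⟨hx, hy⟩ := hxs
    set x' : s := ⟨x, hx⟩ with hx'def
    set y' : s := ⟨y, hy⟩ with hy'def
    have hx'y' : x' ≠ y' := fun h => hxy (congrArg Subtype.val h)
    -- the induced subgraph of the deleted graph is the deletion in the induced subgraph
    have hgraph : SimpleGraph.induce s (G.deleteEdges {s(x, y)})
        = (SimpleGraph.induce s G).deleteEdges {s(x', y')} := by
      ext a b
      simp only [comap_adj, Function.Embedding.coe_subtype, SimpleGraph.deleteEdges_adj,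
        Set.mem_singleton_iff]
      constructor
      · rintro ⟨h1, h2⟩
        refine ⟨h1, fun hab => h2 ?_⟩
        rcases Sym2.eq_iff.mp hab with ⟨h3, h4⟩ | ⟨h3, h4⟩
        · rw [h3, h4]
        · rw [h3, h4]; exact Sym2.eq_swap
      · rintro ⟨h1, h2⟩
        refine ⟨h1, fun hab => h2 ?_⟩
        rcases Sym2.eq_iff.mp hab with ⟨h3, h4⟩ | ⟨h3, h4⟩
        · rw [Sym2.eq_iff]
          exact Or.inl ⟨Subtype.ext h3, Subtype.ext h4⟩
        · rw [Sym2.eq_iff]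
          exact Or.inr ⟨Subtype.ext h3, Subtype.ext h4⟩
    rw [hgraph] at hconn ⊢
    set K := SimpleGraph.induce s G with hK
    set H := K.deleteEdges {s(x', y')} with hH
    -- twins inside the induced subgraph
    have htwK : ∀ a : s, a ≠ x' → a ≠ y' → (K.Adj a x' ↔ K.Adj a y') := by
      intro a hax hay
      exact htw ↑a (fun h => hax (Subtype.ext h)) (fun h => hay (Subtype.ext h))
    have hKadj : K.Adj x' y' := hadj
    have hKconn : K.Connected := hconn.mono (SimpleGraph.deleteEdges_le _)
    -- a common neighbour of x' and y' inside H
    have hreach : H.Reachable x' y' := hconn x' y'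
    obtain ⟨p⟩ := hreach
    have hnil : ¬ p.Nil := SimpleGraph.Walk.not_nil_of_ne hx'y'
    set b : s := p.getVert 1 with hbdef
    have hb1 : H.Adj x' b := p.adj_snd hnil
    have hbx : b ≠ x' := hb1.ne'
    have hby : b ≠ y' := by
      intro h
      rw [h] at hb1
      exact (SimpleGraph.deleteEdges_adj.mp hb1).2 rfl
    have hKxb : K.Adj x' b := (SimpleGraph.deleteEdges_adj.mp hb1).1
    have hKby : K.Adj b y' := (htwK b hbx hby).mp hKxb.symm
    have hb2 : H.Adj b y' := by
      refine SimpleGraph.deleteEdges_adj.mpr ⟨hKby, ?_⟩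
      simp only [Set.mem_singleton_iff, Sym2.eq_iff]
      push_neg
      exact ⟨fun h' => absurd h' hbx, fun h' => absurd h' hby⟩
    -- both distances between the twins equal two
    have hHdist : H.dist x' y' = 2 := by
      have hle : H.dist x' y' ≤ 2 := by
        have := SimpleGraph.dist_le (Walk.cons hb1 (Walk.cons hb2 Walk.nil))
        simpa using this
      have h0 : H.dist x' y' ≠ 0 := by
        intro h
        rcases SimpleGraph.dist_eq_zero_iff_eq_or_not_reachable.mp h with h' | h'
        · exact hx'y' h'
        · exact h' ⟨p⟩
      have h1 : H.dist x' y' ≠ 1 := by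
        intro h
        exact (SimpleGraph.deleteEdges_adj.mp
          (SimpleGraph.dist_eq_one_iff_adj.mp h)).2 rfl
      omega
    have hGdist : (G.deleteEdges {s(x, y)}).dist x y = 2 := by
      have hGxb0 : G.Adj x ↑b := hKxb
      have hGby0 : G.Adj ↑b y := hKby
      have hbxV : (b : V) ≠ x := fun h => hbx (Subtype.ext h)
      have hbyV : (b : V) ≠ y := fun h => hby (Subtype.ext h)
      have hGxb : (G.deleteEdges {s(x, y)}).Adj x ↑b := by
        refine SimpleGraph.deleteEdges_adj.mpr ⟨hGxb0, ?_⟩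
        simp only [Set.mem_singleton_iff, Sym2.eq_iff]
        push_neg
        exact ⟨fun _ => hbyV, fun h => absurd h hxy⟩
      have hGby : (G.deleteEdges {s(x, y)}).Adj ↑b y := by
        refine SimpleGraph.deleteEdges_adj.mpr ⟨hGby0, ?_⟩
        simp only [Set.mem_singleton_iff, Sym2.eq_iff]
        push_neg
        exact ⟨fun h => absurd h hbxV, fun h => absurd h hbyV⟩
      have hle : (G.deleteEdges {s(x, y)}).dist x y ≤ 2 := by
        have := SimpleGraph.dist_le (Walk.cons hGxb (Walk.cons hGby Walk.nil))
        simpa using this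
      have h0 : (G.deleteEdges {s(x, y)}).dist x y ≠ 0 := by
        intro h
        rcases SimpleGraph.dist_eq_zero_iff_eq_or_not_reachable.mp h with h' | h'
        · exact hxy h'
        · exact h' ⟨Walk.cons hGxb (Walk.cons hGby Walk.nil)⟩
      have h1 : (G.deleteEdges {s(x, y)}).dist x y ≠ 1 := by
        intro h
        exact (SimpleGraph.deleteEdges_adj.mp
          (SimpleGraph.dist_eq_one_iff_adj.mp h)).2 rfl
      omega
    by_cases huv : s(u, v) = s(x', y')
    · rcases Sym2.eq_iff.mp huv with ⟨h1, h2⟩ | ⟨h1, h2⟩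
      · subst h1; subst h2
        rw [hHdist]
        exact hGdist.symm
      · subst h1; subst h2
        rw [SimpleGraph.dist_comm, hHdist, SimpleGraph.dist_comm (G := G.deleteEdges {s(x, y)})]
        exact hGdist.symm
    · have huv' : s((u : V), (v : V)) ≠ s(x, y) := by
        intro h'
        apply huv
        rcases Sym2.eq_iff.mp h' with ⟨h1, h2⟩ | ⟨h1, h2⟩
        · rw [Sym2.eq_iff]; exact Or.inl ⟨Subtype.ext h1, Subtype.ext h2⟩
        · rw [Sym2.eq_iff]; exact Or.inr ⟨Subtype.ext h1, Subtype.ext h2⟩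
      rw [dist_deleteEdge htwK huv, hDH s hKconn u v, ← dist_deleteEdge htw huv']
  · -- not both twins lie in `s`: the induced graphs agree
    have hgraph : SimpleGraph.induce s (G.deleteEdges {s(x, y)}) = SimpleGraph.induce s G := by
      ext a b
      simp only [comap_adj, Function.Embedding.coe_subtype, SimpleGraph.deleteEdges_adj,
        Set.mem_singleton_iff]
      constructor
      · exact fun h => h.1
      · intro h
        refine ⟨h, fun hab => hxs ?_⟩
        rcases Sym2.eq_iff.mp hab with ⟨h1, h2⟩ | ⟨h1, h2⟩
        · exact ⟨h1 ▸ a.2, h2 ▸ b.2⟩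
        · exact ⟨h2 ▸ b.2, h1 ▸ a.2⟩
    rw [hgraph] at hconn ⊢
    have huv' : s((u : V), (v : V)) ≠ s(x, y) := by
      intro h'
      apply hxs
      rcases Sym2.eq_iff.mp h' with ⟨h1, h2⟩ | ⟨h1, h2⟩
      · exact ⟨h1 ▸ u.2, h2 ▸ v.2⟩
      · exact ⟨h2 ▸ v.2, h1 ▸ u.2⟩
    rw [hDH s hconn u v, ← dist_deleteEdge htw huv']
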